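/- Let w1, w2, q, n be positive integers with w1 < w2, q ≥ 2 and w2 + (q-1)·w1 ≤ n. Then there exists an SHF(N; n, q, {w1^{q-1}, w2}), i.e., a family of N functions from an n-set to a q-set such that every choice of q pairwise disjoint column subsets, q-1 of them of size w1 and one of size w2, is separated by some function, where N = (1/(q-1)!) · C(n, w1) · C(n - w1, w1) · C(n - 2·w1, w1) · ⋯ · C(n - (q-2)·w1, w1). -/

import Mathlib

/-- `F` is a separating hash family of type `{w 0, w 1, ..., w (t-1)}`:
for every choice of pairwise disjoint subsets `X i` of the domain with
`|X i| = w i`, some function in the family maps them to pairwise disjoint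
image sets. -/
def IsSHF {N n q t : ℕ} (F : Fin N → Fin n → Fin q) (w : Fin t → ℕ) : Prop :=
  ∀ X : Fin t → Finset (Fin n),
    (∀ i, (X i).card = w i) →
    (∀ i j, i ≠ j → Disjoint (X i) (X j)) →
    ∃ k : Fin N, ∀ i j, i ≠ j →
      Disjoint ((X i).image (F k)) ((X j).image (F k))

open Finset

open scoped Classical in
/-- tuples of `t` pairwise disjoint `w`-subsets of `Fin n` -/
noncomputable def Tset (n w t : ℕ) : Finset (Fin t → Finset (Fin n)) :=
  Finset.univ.filter
    (fun g => (∀ j, (g j).card = w) ∧ ∀ a b, a ≠ b → Disjoint (g a) (g b))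

lemma mem_Tset {n w t : ℕ} {g : Fin t → Finset (Fin n)} :
    g ∈ Tset n w t ↔ (∀ j, (g j).card = w) ∧ ∀ a b, a ≠ b → Disjoint (g a) (g b) := by
  classical
  simp [Tset]

lemma cardT (n w : ℕ) : ∀ t, (Tset n w t).card =
    ∏ j ∈ Finset.range t, Nat.choose (n - j * w) w := by
  intro t
  induction t with
  | zero =>
      simp only [Finset.range_zero, Finset.prod_empty]
      have : Tset n w 0 = Finset.univ := by
        ext g; simp only [mem_Tset, Finset.mem_univ, iff_true]
        exact ⟨fun j => j.elim0, fun a b _ => a.elim0⟩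
      rw [this]
      simp
  | succ t ih =>
      classical
      rw [Finset.prod_range_succ, ← ih]
      have hmap : ∀ g' ∈ Tset n w (t+1),
          (g' ∘ Fin.castSucc) ∈ Tset n w t := by
        intro g' hg'
        rw [mem_Tset] at hg' ⊢
        exact ⟨fun j => hg'.1 _,
          fun a b hab => hg'.2 _ _ (fun h => hab (Fin.castSucc_injective t h))⟩
      rw [Finset.card_eq_sum_card_fiberwise hmap]
      have hfib : ∀ g ∈ Tset n w t,
          ((Tset n w (t+1)).filter (fun g' => g' ∘ Fin.castSucc = g)).card
            = Nat.choose (n - t * w) w := by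
        intro g hg
        rw [mem_Tset] at hg
        set B : Finset (Fin n) := Finset.univ.biUnion g with hB
        have hBcard : B.card = t * w := by
          rw [hB, Finset.card_biUnion (fun a _ b _ hab => hg.2 a b hab)]
          simp [hg.1, mul_comm]
        set U : Finset (Fin n) := Finset.univ \ B with hU
        have hUcard : U.card = n - t * w := by
          rw [hU, Finset.card_sdiff_of_subset (Finset.subset_univ _), hBcard]
          simp
        have hsub : ∀ {x : Fin n}, x ∈ U ↔ ∀ j, x ∉ g j := by
          intro x; simp [hU, hB]
        rw [← hUcard, ← Finset.card_powersetCard]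
        refine Finset.card_nbij' (fun g' => g' (Fin.last t))
          (fun A => Fin.snoc g A) ?_ ?_ ?_ ?_
        · intro g' hg'
          rw [Finset.mem_coe, Finset.mem_filter, mem_Tset] at hg'
          rw [Finset.mem_coe, Finset.mem_powersetCard]
          refine ⟨fun x hx => hsub.2 (fun j hxj => ?_), hg'.1.1 _⟩
          have hd := hg'.1.2 (Fin.last t) (Fin.castSucc j)
            (Fin.ne_of_gt (Fin.castSucc_lt_last j))
          have : x ∈ g' (Fin.castSucc j) := by
            rw [show g' (Fin.castSucc j) = g j from congrFun hg'.2 j]; exact hxj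
          exact Finset.disjoint_left.1 hd hx this
        · intro A hA
          rw [Finset.mem_coe, Finset.mem_powersetCard] at hA
          rw [Finset.mem_coe, Finset.mem_filter, mem_Tset]
          have hcomp : (Fin.snoc g A : Fin (t+1) → Finset (Fin n)) ∘ Fin.castSucc = g := by
            funext j; simp [Fin.snoc_castSucc]
          have hdisjA : ∀ j : Fin t, Disjoint A (g j) := by
            intro j
            rw [Finset.disjoint_left]
            intro x hx
            exact hsub.1 (hA.1 hx) j
          refine ⟨⟨?_, ?_⟩, hcomp⟩
          · intro j
            refine Fin.lastCases ?_ ?_ j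
            · simpa using hA.2
            · intro k; simpa using hg.1 k
          · intro a b hab
            rcases Fin.eq_castSucc_or_eq_last a with ⟨a', rfl⟩ | rfl <;>
              rcases Fin.eq_castSucc_or_eq_last b with ⟨b', rfl⟩ | rfl
            · simp only [Fin.snoc_castSucc]
              exact hg.2 a' b' (fun h => hab (by rw [h]))
            · simp only [Fin.snoc_castSucc, Fin.snoc_last]
              exact (hdisjA a').symm
            · simp only [Fin.snoc_castSucc, Fin.snoc_last]
              exact hdisjA b'
            · exact absurd rfl hab
        · intro g' hg'
          rw [Finset.mem_coe, Finset.mem_filter] at hg'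
          funext j
          refine Fin.lastCases ?_ ?_ j
          · simp
          · intro k
            simp only [Fin.snoc_castSucc]
            exact (congrFun hg'.2 k).symm
        · intro A hA
          simp
      rw [Finset.sum_congr rfl hfib, Finset.sum_const, smul_eq_mul]

lemma g_inj {n w t : ℕ} (hw : 1 ≤ w) {g : Fin t → Finset (Fin n)}
    (hg : g ∈ Tset n w t) : Function.Injective g := by
  intro a b hab
  by_contra hne
  have hd := (mem_Tset.1 hg).2 a b hne
  rw [hab, disjoint_self] at hd
  have hc := (mem_Tset.1 hg).1 b
  rw [hd] at hc
  simp at hc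
  omega

lemma cardT_fact {n w t : ℕ} (hw : 1 ≤ w) :
    (Tset n w t).card =
      ((Tset n w t).image (fun g => Finset.image g Finset.univ)).card * t.factorial := by
  classical
  set S := (Tset n w t).image (fun g => Finset.image g Finset.univ) with hS
  have hmap : ∀ g ∈ Tset n w t, Finset.image g Finset.univ ∈ S :=
    fun g hg => Finset.mem_image_of_mem _ hg
  rw [Finset.card_eq_sum_card_fiberwise hmap]
  have hfib : ∀ s ∈ S,
      ((Tset n w t).filter (fun g => Finset.image g Finset.univ = s)).card
        = t.factorial := by
    intro s hs
    obtain ⟨g0, hg0, hg0s⟩ := Finset.mem_image.1 hs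
    have hg0inj := g_inj hw hg0
    have key : (Finset.univ : Finset (Equiv.Perm (Fin t))).card =
        ((Tset n w t).filter (fun g => Finset.image g Finset.univ = s)).card := by
      refine Finset.card_nbij (fun σ => g0 ∘ σ) ?_ ?_ ?_
      · intro σ _
        rw [Finset.mem_coe, Finset.mem_filter]
        refine ⟨?_, ?_⟩
        · rw [mem_Tset]
          exact ⟨fun j => (mem_Tset.1 hg0).1 _,
            fun a b hab => (mem_Tset.1 hg0).2 _ _ (fun h => hab (σ.injective h))⟩
        · rw [← hg0s, ← Finset.image_image, Finset.image_univ_equiv]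
      · intro σ1 _ σ2 _ h
        ext j
        rw [hg0inj (congrFun h j)]
      · intro g' hg'
        simp only [Finset.coe_filter, Set.mem_setOf_eq] at hg'
        have hg'T := hg'.1
        have hg'im : Finset.image g' Finset.univ = s := hg'.2
        have hex : ∀ j : Fin t, ∃ i, g0 i = g' j := by
          intro j
          have : g' j ∈ Finset.image g0 Finset.univ := by
            rw [hg0s, ← hg'im]
            exact Finset.mem_image_of_mem _ (Finset.mem_univ j)
          obtain ⟨i, _, hi⟩ := Finset.mem_image.1 this
          exact ⟨i, hi⟩
        choose τ hτ using hex
        have hτinj : Function.Injective τ := by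
          intro a b hab
          exact g_inj hw hg'T (by rw [← hτ a, ← hτ b, hab])
        refine ⟨Equiv.ofBijective τ (Finite.injective_iff_bijective.1 hτinj), ?_, ?_⟩
        · exact Finset.mem_coe.2 (Finset.mem_univ _)
        · funext j
          exact hτ j
    rw [← key, Finset.card_univ, Fintype.card_perm, Fintype.card_fin]
  rw [Finset.sum_congr rfl hfib, Finset.sum_const, smul_eq_mul]

open scoped Classical in
noncomputable def mkfun {n : ℕ} (q : ℕ) (hq : 0 < q)
    (g : Fin (q-1) → Finset (Fin n)) : Fin n → Fin q :=
  fun x => if h : ∃ j, x ∈ g j then Fin.castLE (Nat.sub_le q 1) h.choose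
    else ⟨q-1, by omega⟩

lemma mkfun_mem {n w q : ℕ} (hq : 0 < q) {g : Fin (q-1) → Finset (Fin n)}
    (hg : g ∈ Tset n w (q-1)) {x : Fin n} {j : Fin (q-1)} (hx : x ∈ g j) :
    mkfun q hq g x = Fin.castLE (Nat.sub_le q 1) j := by
  classical
  have h : ∃ j', x ∈ g j' := ⟨j, hx⟩
  simp only [mkfun]
  rw [dif_pos h]
  have hcj : h.choose = j := by
    by_contra hne
    exact Finset.disjoint_left.1 ((mem_Tset.1 hg).2 _ _ hne) h.choose_spec hx
  rw [hcj]

lemma mkfun_not {n q : ℕ} (hq : 0 < q) {g : Fin (q-1) → Finset (Fin n)}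
    {x : Fin n} (hx : ∀ j, x ∉ g j) :
    mkfun q hq g x = ⟨q-1, by omega⟩ := by
  simp only [mkfun]
  rw [dif_neg (not_exists.2 hx)]

/-- There exists an `SHF(N; n, q, {w1^{q-1}, w2})` with
`N = (1/(q-1)!) · C(n,w1) · C(n-w1,w1) ⋯ C(n-(q-2)·w1, w1)`
(stated multiplicatively: `N · (q-1)! = ∏_{j=0}^{q-2} C(n - j·w1, w1)`). -/
theorem stmt_2 (n q w1 w2 : ℕ) (hn : 1 ≤ n) (hq : 2 ≤ q)
    (hw1 : 1 ≤ w1) (hw12 : w1 < w2) (hle : w2 + (q - 1) * w1 ≤ n) :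
    ∃ (N : ℕ) (F : Fin N → Fin n → Fin q),
      IsSHF F (fun i : Fin q => if (i : ℕ) < q - 1 then w1 else w2) ∧
      N * Nat.factorial (q - 1) =
        ∏ j ∈ Finset.range (q - 1), Nat.choose (n - j * w1) w1 := by
  classical
  have hq0 : 0 < q := by omega
  set S := (Tset n w1 (q-1)).image (fun g => Finset.image g Finset.univ) with hS
  let rep : {s // s ∈ S} → (Fin (q-1) → Finset (Fin n)) :=
    fun s => (Finset.mem_image.1 s.2).choose
  have hrep : ∀ s : {s // s ∈ S}, rep s ∈ Tset n w1 (q-1) ∧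
      Finset.image (rep s) Finset.univ = s.1 := by
    intro s
    obtain ⟨h1, h2⟩ := (Finset.mem_image.1 s.2).choose_spec
    exact ⟨h1, h2⟩
  refine ⟨S.card, fun k => mkfun q hq0 (rep (S.equivFin.symm k)), ?_, ?_⟩
  · intro X hXcard hXdisj
    set g : Fin (q-1) → Finset (Fin n) :=
      fun j => X (Fin.castLE (Nat.sub_le q 1) j) with hgdef
    have hgT : g ∈ Tset n w1 (q-1) := by
      rw [mem_Tset]
      constructor
      · intro j
        have h := hXcard (Fin.castLE (Nat.sub_le q 1) j)
        simp only [Fin.coe_castLE] at h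
        rwa [if_pos j.2] at h
      · intro a b hab
        exact hXdisj _ _ (fun h => hab (Fin.castLE_injective _ h))
    have hsS : Finset.image g Finset.univ ∈ S := Finset.mem_image_of_mem _ hgT
    set s : {s // s ∈ S} := ⟨Finset.image g Finset.univ, hsS⟩ with hsdef
    refine ⟨S.equivFin s, ?_⟩
    have hrw : S.equivFin.symm (S.equivFin s) = s := Equiv.symm_apply_apply _ _
    set g' : Fin (q-1) → Finset (Fin n) := rep s with hg'def
    have hg'T : g' ∈ Tset n w1 (q-1) := (hrep s).1
    have hg'im : Finset.image g' Finset.univ = Finset.image g Finset.univ := (hrep s).2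
    -- for each j, find σ j with g' (σ j) = g j
    have hex : ∀ j : Fin (q-1), ∃ i, g' i = g j := by
      intro j
      have : g j ∈ Finset.image g' Finset.univ := by
        rw [hg'im]; exact Finset.mem_image_of_mem _ (Finset.mem_univ j)
      obtain ⟨i, _, hi⟩ := Finset.mem_image.1 this
      exact ⟨i, hi⟩
    choose σ hσ using hex
    have hσinj : Function.Injective σ := by
      intro a b hab
      exact g_inj hw1 hgT (by rw [← hσ a, ← hσ b, hab])
    -- the color of each block
    set c : Fin q → Fin q := fun i =>
      if h : (i : ℕ) < q - 1 then Fin.castLE (Nat.sub_le q 1) (σ ⟨(i : ℕ), h⟩)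
      else ⟨q-1, by omega⟩ with hcdef
    have hc1 : ∀ (i : Fin q) (h : (i : ℕ) < q - 1),
        c i = Fin.castLE (Nat.sub_le q 1) (σ ⟨(i : ℕ), h⟩) := fun i h => dif_pos h
    have hc2 : ∀ (i : Fin q), ¬ ((i : ℕ) < q - 1) →
        c i = ⟨q-1, by omega⟩ := fun i h => dif_neg h
    have himg : ∀ i : Fin q, ∀ x ∈ X i, mkfun q hq0 g' x = c i := by
      intro i x hx
      by_cases h : (i : ℕ) < q - 1
      · have hXi : X i = g ⟨(i : ℕ), h⟩ := by
          show X i = X (Fin.castLE (Nat.sub_le q 1) ⟨(i : ℕ), h⟩)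
          congr 1
        have hx' : x ∈ g' (σ ⟨(i : ℕ), h⟩) := by
          rw [hσ]; rw [hXi] at hx; exact hx
        rw [mkfun_mem hq0 hg'T hx', hc1 i h]
      · have hnot : ∀ j, x ∉ g' j := by
          intro j hxj
          have : g' j ∈ Finset.image g Finset.univ := by
            rw [← hg'im]; exact Finset.mem_image_of_mem _ (Finset.mem_univ j)
          obtain ⟨j2, _, hj2⟩ := Finset.mem_image.1 this
          have hne : i ≠ Fin.castLE (Nat.sub_le q 1) j2 := by
            intro he
            have : (i : ℕ) = (j2 : ℕ) := by rw [he]; rfl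
            omega
          have hd := hXdisj i (Fin.castLE (Nat.sub_le q 1) j2) hne
          have : x ∈ g j2 := by rw [hj2]; exact hxj
          exact Finset.disjoint_left.1 hd hx this
        rw [mkfun_not hq0 hnot, hc2 i h]
    have hcne : ∀ i j : Fin q, i ≠ j → c i ≠ c j := by
      intro i j hij
      have hijv : (i : ℕ) ≠ (j : ℕ) := fun h => hij (Fin.ext h)
      by_cases hi : (i : ℕ) < q - 1 <;> by_cases hj : (j : ℕ) < q - 1
      · rw [hc1 i hi, hc1 j hj]
        intro he
        have : σ ⟨(i : ℕ), hi⟩ = σ ⟨(j : ℕ), hj⟩ := Fin.castLE_injective _ he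
        have h2 := hσinj this
        simp only [Fin.mk.injEq] at h2
        exact hijv h2
      · rw [hc1 i hi, hc2 j hj]
        intro he
        have : ((σ ⟨(i : ℕ), hi⟩ : Fin (q-1)) : ℕ) = q - 1 := congrArg Fin.val he
        have := (σ ⟨(i : ℕ), hi⟩).2
        omega
      · rw [hc2 i hi, hc1 j hj]
        intro he
        have : q - 1 = ((σ ⟨(j : ℕ), hj⟩ : Fin (q-1)) : ℕ) := congrArg Fin.val he
        have := (σ ⟨(j : ℕ), hj⟩).2
        omega
      · exact absurd (Fin.ext (by omega : (i : ℕ) = (j : ℕ))) hij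
    intro i j hij
    rw [Finset.disjoint_left]
    intro y hyi hyj
    simp only [hrw] at hyi hyj
    obtain ⟨x, hx, hxe⟩ := Finset.mem_image.1 hyi
    obtain ⟨x', hx', hx'e⟩ := Finset.mem_image.1 hyj
    rw [himg i x hx] at hxe
    rw [himg j x' hx'] at hx'e
    exact hcne i j hij (hxe.trans hx'e.symm)
  · rw [← cardT_fact hw1, cardT]
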